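/- Let c : [0,T] → ℝ be differentiable with c(t) ≥ ν > 0, and define for each k the energy E_k(t) := |u_k'(t)|² + λ_k² c(t) |u_k(t)|² along a solution of u_k'' + λ_k² c₀(t) u_k = 0 where c₀ : [0,T] → ℝ is continuous. Then E_k'(t) ≤ ( |c'(t)|/c(t) + λ_k |c(t)-c₀(t)|/√(c(t)) ) · E_k(t) for all t ∈ [0,T]. -/

import Mathlib

lemma stmt_11_aux (l s γ δ a b A B : ℝ) (hl : 0 ≤ l) (hs : 0 < s)
    (hA : γ ≤ A) (hA0 : 0 ≤ A) (hB1 : δ ≤ B) (hB2 : -δ ≤ B) :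
    (l ^ 2 * γ * a ^ 2 + 2 * l ^ 2 * δ * (a * b)) * (s * s) ≤
      (A + l * B * s) * (b ^ 2 + l ^ 2 * (s * s) * a ^ 2) := by
  nlinarith [mul_nonneg (mul_nonneg (mul_nonneg hl hs.le) (by linarith : (0:ℝ) ≤ B + δ))
      (sq_nonneg (b - l * s * a)),
    mul_nonneg (mul_nonneg (mul_nonneg hl hs.le) (by linarith : (0:ℝ) ≤ B - δ))
      (sq_nonneg (b + l * s * a)),
    mul_nonneg (by linarith : (0:ℝ) ≤ A - γ) (sq_nonneg (l * s * a)),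
    mul_nonneg hA0 (sq_nonneg b)]

theorem stmt_11 (T ν lamk : ℝ) (c c' c₀ u u' : ℝ → ℝ)
    (hT : 0 < T) (hν : 0 < ν) (hlam : 0 ≤ lamk)
    (hc₀ : Continuous c₀)
    (hc : ∀ t, HasDerivAt c (c' t) t)
    (hclow : ∀ t ∈ Set.Icc 0 T, ν ≤ c t)
    (hu : ∀ t, HasDerivAt u (u' t) t)
    (hu' : ∀ t, HasDerivAt u' (-(lamk ^ 2 * c₀ t * u t)) t) :
    ∀ t ∈ Set.Icc (0:ℝ) T,
      ∃ d : ℝ,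
        HasDerivAt (fun s => (u' s) ^ 2 + lamk ^ 2 * c s * (u s) ^ 2) d t ∧
        d ≤ (|c' t| / c t + lamk * |c t - c₀ t| / Real.sqrt (c t)) *
              ((u' t) ^ 2 + lamk ^ 2 * c t * (u t) ^ 2) := by
  intro t ht
  have hct : 0 < c t := lt_of_lt_of_le hν (hclow t ht)
  set s := Real.sqrt (c t) with hs
  have hspos : 0 < s := Real.sqrt_pos.mpr hct
  have hs2 : s * s = c t := Real.mul_self_sqrt hct.le
  have h1 : HasDerivAt (fun r => (u' r) ^ 2) (2 * u' t ^ 1 * (-(lamk ^ 2 * c₀ t * u t))) t :=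
    (hu' t).pow 2
  have h2 : HasDerivAt (fun r => lamk ^ 2 * (c r * (u r) ^ 2))
      (lamk ^ 2 * (c' t * u t ^ 2 + c t * (2 * u t ^ 1 * u' t))) t :=
    ((hc t).mul ((hu t).pow 2)).const_mul (lamk ^ 2)
  have hder : HasDerivAt (fun r => (u' r) ^ 2 + lamk ^ 2 * c r * (u r) ^ 2)
      (2 * u' t ^ 1 * (-(lamk ^ 2 * c₀ t * u t)) +
        lamk ^ 2 * (c' t * u t ^ 2 + c t * (2 * u t ^ 1 * u' t))) t := by
    refine (h1.add h2).congr_of_eventuallyEq (Filter.Eventually.of_forall fun r => ?_)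
    show u' r ^ 2 + lamk ^ 2 * c r * u r ^ 2 = u' r ^ 2 + lamk ^ 2 * (c r * u r ^ 2)
    ring
  refine ⟨_, hder, ?_⟩
  have key := stmt_11_aux lamk s (c' t) (c t - c₀ t) (u t) (u' t) (|c' t|) (|c t - c₀ t|)
    hlam hspos (le_abs_self _) (abs_nonneg _) (le_abs_self _) (neg_le_abs _)
  have hdval : (2 * u' t ^ 1 * (-(lamk ^ 2 * c₀ t * u t)) +
      lamk ^ 2 * (c' t * u t ^ 2 + c t * (2 * u t ^ 1 * u' t))) * c t =
      (lamk ^ 2 * c' t * u t ^ 2 + 2 * lamk ^ 2 * (c t - c₀ t) * (u t * u' t)) * (s * s) := by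
    rw [hs2]; ring
  have hEval : (|c' t| + lamk * |c t - c₀ t| * s) *
      ((u' t) ^ 2 + lamk ^ 2 * (s * s) * (u t) ^ 2) =
      (|c' t| + lamk * |c t - c₀ t| * s) *
      ((u' t) ^ 2 + lamk ^ 2 * c t * (u t) ^ 2) := by rw [hs2]
  have key2 : (2 * u' t ^ 1 * (-(lamk ^ 2 * c₀ t * u t)) +
      lamk ^ 2 * (c' t * u t ^ 2 + c t * (2 * u t ^ 1 * u' t))) * c t ≤
      (|c' t| + lamk * |c t - c₀ t| * s) *
      ((u' t) ^ 2 + lamk ^ 2 * c t * (u t) ^ 2) := by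
    rw [hdval, ← hEval]; exact key
  have rhs_eq : (|c' t| / c t + lamk * |c t - c₀ t| / s) *
      ((u' t) ^ 2 + lamk ^ 2 * c t * (u t) ^ 2) =
      ((|c' t| + lamk * |c t - c₀ t| * s) *
        ((u' t) ^ 2 + lamk ^ 2 * c t * (u t) ^ 2)) / c t := by
    rw [eq_div_iff hct.ne']
    rw [← hs2]
    field_simp
  rw [rhs_eq, le_div_iff₀ hct]
  exact key2
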